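/- Let 1 ≤ p, q ≤ ∞ and let σ = (σ_k)_{k≥1} be a non-increasing sequence of positive real numbers with σ_k → 0 such that the diagonal operator D_σ : ℓ_p → ℓ_q is bounded. Then for all n ≥ 1 the n-th entropy number satisfies e_n(D_σ) ≥ sup_{k≥1} ( (λ^k(B_{ℓ_p^k}) / λ^k(B_{ℓ_q^k})) · σ_1·σ_2·…·σ_k / n )^{1/k}, where λ^k denotes k-dimensional Lebesgue measure and B_{ℓ_p^k} is the closed unit ball of ℝ^k with the ℓ_p norm. -/

import Mathlib

open Metric Filter MeasureTheory
open scoped ENNReal Pointwise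

/-- The `n`-th (inner) entropy number of a set `T` in a normed space: the infimum of all
`ε > 0` such that `T` can be covered by `n` closed balls of radius `ε`. -/
noncomputable def entropyNumber {Y : Type*} [SeminormedAddCommGroup Y]
    (n : ℕ) (T : Set Y) : ℝ :=
  sInf {ε : ℝ | 0 < ε ∧ ∃ y : Fin n → Y, T ⊆ ⋃ i, Metric.closedBall (y i) ε}

/-- The `k`-dimensional Lebesgue volume of the closed unit ball of `ℓ_p^k = PiLp p ℝ^k`
(computed in the underlying space `Fin k → ℝ`). -/
noncomputable def ballVolume (p : ℝ≥0∞) [Fact (1 ≤ p)] (k : ℕ) : ℝ≥0∞ :=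
  volume ((WithLp.equiv p (∀ _ : Fin k, ℝ)) ''
    Metric.closedBall (0 : PiLp p (fun _ : Fin k => ℝ)) 1)

/-- The coordinate projection of an `ℓ_q` sequence onto its first `m` coordinates is
norm-nonincreasing as a map to `ℓ_q^m`. -/
lemma proj_norm_le (q : ℝ≥0∞) [Fact (1 ≤ q)] (m : ℕ) (w : lp (fun _ : ℕ => ℝ) q) :
    ‖(WithLp.equiv q (∀ _ : Fin m, ℝ)).symm (fun i : Fin m => w (i : ℕ))‖ ≤ ‖w‖ := by
  have hq1 : (1 : ℝ≥0∞) ≤ q := Fact.out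
  have hq0 : q ≠ 0 := (lt_of_lt_of_le zero_lt_one hq1).ne'
  by_cases hq : q = ∞
  · subst hq
    rw [PiLp.norm_eq_ciSup]
    rcases isEmpty_or_nonempty (Fin m) with h|h
    · rw [Real.iSup_of_isEmpty]; exact norm_nonneg w
    · refine ciSup_le fun i => ?_
      rw [WithLp.equiv_symm_apply, PiLp.toLp_apply]
      exact lp.norm_apply_le_norm (by simp) w (i : ℕ)
  · have hq' : 0 < q.toReal := ENNReal.toReal_pos hq0 hq
    rw [PiLp.norm_eq_sum hq']
    have h1 : ∑ i : Fin m, ‖(WithLp.equiv q (∀ _ : Fin m, ℝ)).symm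
          (fun j : Fin m => w (j : ℕ)) i‖ ^ q.toReal
        = ∑ j ∈ Finset.range m, ‖w j‖ ^ q.toReal := by
      simp only [WithLp.equiv_symm_apply, PiLp.toLp_apply]
      exact Fin.sum_univ_eq_sum_range (fun j => ‖w j‖ ^ q.toReal) m
    calc (∑ i : Fin m, ‖(WithLp.equiv q (∀ _ : Fin m, ℝ)).symm
          (fun j : Fin m => w (j : ℕ)) i‖ ^ q.toReal) ^ (1 / q.toReal)
        ≤ (‖w‖ ^ q.toReal) ^ (1 / q.toReal) := by
          apply Real.rpow_le_rpow (by positivity) _ (by positivity)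
          rw [h1]
          exact lp.sum_rpow_le_norm_rpow hq' w (Finset.range m)
      _ = ‖w‖ := by
          rw [← Real.rpow_mul (norm_nonneg w), mul_one_div_cancel hq'.ne', Real.rpow_one]

/-- Extension of a finite vector by zero to a sequence indexed by `ℕ`. -/
noncomputable def extFun (m : ℕ) (v : Fin m → ℝ) : ℕ → ℝ :=
  fun j => if h : j < m then v ⟨j, h⟩ else 0

lemma extFun_memℓp (p : ℝ≥0∞) (m : ℕ) (v : Fin m → ℝ) : Memℓp (extFun m v) p := by
  refine Memℓp.of_exponent_ge (memℓp_zero ?_) (zero_le : (0 : ℝ≥0∞) ≤ p)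
  refine (Set.finite_Iio m).subset fun j hj => ?_
  by_contra hjm
  exact hj (dif_neg (by simpa using hjm))

/-- The zero-extension of a vector in `ℓ_p^m` to `ℓ_p` has no larger norm. -/
lemma norm_ext_le (p : ℝ≥0∞) [Fact (1 ≤ p)] (m : ℕ) (v : PiLp p (fun _ : Fin m => ℝ)) :
    ‖(⟨extFun m (WithLp.equiv p (∀ _ : Fin m, ℝ) v), extFun_memℓp p m _⟩ :
        lp (fun _ : ℕ => ℝ) p)‖ ≤ ‖v‖ := by
  have hp1 : (1 : ℝ≥0∞) ≤ p := Fact.out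
  have hp0 : p ≠ 0 := (lt_of_lt_of_le zero_lt_one hp1).ne'
  by_cases hp : p = ∞
  · subst hp
    refine lp.norm_le_of_forall_le (norm_nonneg v) fun j => ?_
    show ‖extFun m (WithLp.equiv ⊤ (∀ _ : Fin m, ℝ) v) j‖ ≤ ‖v‖
    unfold extFun
    split
    · next h =>
      rw [PiLp.norm_eq_ciSup]
      exact le_ciSup (f := fun i : Fin m => ‖v i‖) (Set.Finite.bddAbove (Set.finite_range _)) ⟨j, h⟩
    · simp only [norm_zero]; exact norm_nonneg v
  · have hp' : 0 < p.toReal := ENNReal.toReal_pos hp0 hp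
    refine lp.norm_le_of_forall_sum_le hp' (norm_nonneg v) fun s => ?_
    have hzero : ∀ j ∈ s, ‖extFun m (WithLp.equiv p (∀ _ : Fin m, ℝ) v) j‖ ^ p.toReal ≠ 0
        → j < m := by
      intro j _ hne
      by_contra hjm
      exact hne (by simp [extFun, dif_neg hjm, Real.zero_rpow hp'.ne'])
    calc ∑ j ∈ s, ‖extFun m (WithLp.equiv p (∀ _ : Fin m, ℝ) v) j‖ ^ p.toReal
        = ∑ j ∈ s.filter (· < m), ‖extFun m (WithLp.equiv p (∀ _ : Fin m, ℝ) v) j‖ ^ p.toReal :=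
          (Finset.sum_filter_of_ne hzero).symm
      _ ≤ ∑ j ∈ Finset.range m, ‖extFun m (WithLp.equiv p (∀ _ : Fin m, ℝ) v) j‖ ^ p.toReal := by
          refine Finset.sum_le_sum_of_subset_of_nonneg ?_ fun j _ _ => by positivity
          intro j hj
          rw [Finset.mem_filter] at hj
          exact Finset.mem_range.2 hj.2
      _ = ∑ i : Fin m, ‖v i‖ ^ p.toReal := by
          rw [← Fin.sum_univ_eq_sum_range
            (fun j => ‖extFun m (WithLp.equiv p (∀ _ : Fin m, ℝ) v) j‖ ^ p.toReal) m]
          refine Finset.sum_congr rfl fun i _ => ?_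
          simp [extFun, i.isLt]
      _ = ‖v‖ ^ p.toReal := by
          rw [PiLp.norm_eq_sum hp', ← Real.rpow_mul (by positivity), one_div_mul_cancel hp'.ne',
            Real.rpow_one]

lemma ballVolume_ne_top (r : ℝ≥0∞) [Fact (1 ≤ r)] (m : ℕ) : ballVolume r m ≠ ∞ := by
  have hb : Bornology.IsBounded ((WithLp.equiv r (∀ _ : Fin m, ℝ)) ''
      Metric.closedBall (0 : PiLp r (fun _ : Fin m => ℝ)) 1) := by
    have := ((PiLp.continuousLinearEquiv r ℝ
        (fun _ : Fin m => ℝ)).toContinuousLinearMap.lipschitz).isBounded_image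
      (isBounded_closedBall (x := (0 : PiLp r (fun _ : Fin m => ℝ))) (r := 1))
    simpa [PiLp.coe_continuousLinearEquiv] using this
  obtain ⟨R, hR⟩ := hb.subset_closedBall (0 : ∀ _ : Fin m, ℝ)
  exact ne_top_of_le_ne_top (measure_closedBall_lt_top).ne (measure_mono hR)

lemma ballVolume_pos (r : ℝ≥0∞) [Fact (1 ≤ r)] (m : ℕ) : 0 < ballVolume r m := by
  have hopen : IsOpen ((WithLp.equiv r (∀ _ : Fin m, ℝ)) ''
      Metric.ball (0 : PiLp r (fun _ : Fin m => ℝ)) 1) := by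
    have := (PiLp.continuousLinearEquiv r ℝ (fun _ : Fin m => ℝ)).toHomeomorph.isOpenMap _
      (isOpen_ball (x := (0 : PiLp r (fun _ : Fin m => ℝ))) (ε := 1))
    simpa [PiLp.coe_continuousLinearEquiv] using this
  have hne : ((WithLp.equiv r (∀ _ : Fin m, ℝ)) ''
      Metric.ball (0 : PiLp r (fun _ : Fin m => ℝ)) 1).Nonempty :=
    ⟨_, Set.mem_image_of_mem _ (mem_ball_self one_pos)⟩
  refine lt_of_lt_of_le (hopen.measure_pos volume hne) (measure_mono ?_)
  exact Set.image_mono ball_subset_closedBall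

/-- Volume of the image in `ℝ^m` of a closed `ℓ_q^m`-ball of radius `ε`. -/
lemma vol_image_closedBall (q : ℝ≥0∞) [Fact (1 ≤ q)] (m : ℕ)
    (z : PiLp q (fun _ : Fin m => ℝ)) {ε : ℝ} (hε : 0 < ε) :
    volume ((WithLp.equiv q (∀ _ : Fin m, ℝ)) '' Metric.closedBall z ε)
      = ENNReal.ofReal (ε ^ m) * ballVolume q m := by
  set eqq := WithLp.equiv q (∀ _ : Fin m, ℝ)
  have h1 : Metric.closedBall z ε
      = z +ᵥ (ε • Metric.closedBall (0 : PiLp q (fun _ : Fin m => ℝ)) 1) := by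
    rw [smul_unitClosedBall, Real.norm_of_nonneg hε.le, vadd_closedBall, vadd_eq_add, add_zero]
  have himg_vadd : ∀ (a : PiLp q (fun _ : Fin m => ℝ)) (s : Set (PiLp q (fun _ : Fin m => ℝ))),
      eqq '' (a +ᵥ s) = eqq a +ᵥ (eqq '' s) := by
    intro a s
    rw [← Set.image_vadd, ← Set.image_vadd, Set.image_image, Set.image_image]
    rfl
  have himg_smul : ∀ (s : Set (PiLp q (fun _ : Fin m => ℝ))),
      eqq '' (ε • s) = ε • (eqq '' s) := by
    intro s
    rw [← Set.image_smul, ← Set.image_smul, Set.image_image, Set.image_image]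
    rfl
  rw [h1, himg_vadd, himg_smul, measure_vadd, Measure.addHaar_smul]
  congr 1
  rw [Module.finrank_fin_fun]
  rw [abs_of_pos (pow_pos hε m)]

/-- **Key volume comparison.**  If the image of the unit ball of `ℓ_p` under the diagonal
operator is covered by `n` closed `ε`-balls in `ℓ_q`, then comparing volumes of the
projections onto the first `m` coordinates yields
`σ_1⋯σ_m · λ(B_{ℓ_p^m}) ≤ n · ε^m · λ(B_{ℓ_q^m})`. -/
lemma key_vol (p q : ℝ≥0∞) [Fact (1 ≤ p)] [Fact (1 ≤ q)]
    (σ : ℕ → ℝ) (hσpos : ∀ k, 0 < σ k)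
    (D : lp (fun _ : ℕ => ℝ) p →L[ℝ] lp (fun _ : ℕ => ℝ) q)
    (hD : ∀ (x : lp (fun _ : ℕ => ℝ) p) (k : ℕ), D x k = σ k * x k)
    {n m : ℕ} {ε : ℝ} (hε : 0 < ε) (y : Fin n → lp (fun _ : ℕ => ℝ) q)
    (hcov : D '' Metric.closedBall 0 1 ⊆ ⋃ i, Metric.closedBall (y i) ε) :
    ENNReal.ofReal (∏ j ∈ Finset.range m, σ j) * ballVolume p m
      ≤ n * (ENNReal.ofReal (ε ^ m) * ballVolume q m) := by
  classical
  set eqq := WithLp.equiv q (∀ _ : Fin m, ℝ)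
  set eqp := WithLp.equiv p (∀ _ : Fin m, ℝ)
  set π : lp (fun _ : ℕ => ℝ) q → PiLp q (fun _ : Fin m => ℝ) :=
    fun x => (WithLp.equiv q (∀ _ : Fin m, ℝ)).symm (fun i : Fin m => x (i : ℕ)) with hπdef
  have hπ : ∀ (x z : lp (fun _ : ℕ => ℝ) q), x ∈ Metric.closedBall z ε →
      π x ∈ Metric.closedBall (π z) ε := by
    intro x z hx
    rw [Metric.mem_closedBall, dist_eq_norm] at hx ⊢
    have hsub : π x - π z = π (x - z) := by
      rw [hπdef]
      dsimp only
      rw [WithLp.equiv_symm_apply, ← WithLp.toLp_sub]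
      congr 1
    rw [hsub]
    exact le_trans (proj_norm_le q m (x - z)) hx
  set L : (Fin m → ℝ) →ₗ[ℝ] (Fin m → ℝ) := Matrix.toLin' (Matrix.diagonal fun i : Fin m => σ i)
    with hL
  set Bp := Metric.closedBall (0 : PiLp p (fun _ : Fin m => ℝ)) 1
  -- covering inclusion after projecting to the first `m` coordinates
  have hsub : L '' (eqp '' Bp) ⊆ ⋃ i, eqq '' Metric.closedBall (π (y i)) ε := by
    rintro - ⟨-, ⟨v, hv, rfl⟩, rfl⟩
    set x : lp (fun _ : ℕ => ℝ) p := ⟨extFun m (eqp v), extFun_memℓp p m _⟩ with hx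
    have hxnorm : ‖x‖ ≤ 1 := le_trans (norm_ext_le p m v) (mem_closedBall_zero_iff.1 hv)
    have hDx : D x ∈ ⋃ i, Metric.closedBall (y i) ε :=
      hcov ⟨x, mem_closedBall_zero_iff.2 hxnorm, rfl⟩
    obtain ⟨i, hi⟩ := Set.mem_iUnion.1 hDx
    refine Set.mem_iUnion.2 ⟨i, ⟨π (D x), hπ _ _ hi, ?_⟩⟩
    funext j
    have h1 : eqq (π (D x)) j = σ j * v j := by
      show (D x : ℕ → ℝ) (j : ℕ) = σ j * v j
      rw [hD]
      congr 1
      show extFun m (eqp v) (j : ℕ) = v j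
      simp only [extFun, j.isLt, dif_pos, Fin.eta]
      rfl
    have h2 : L (eqp v) j = σ j * v j := by
      rw [hL]
      rw [Matrix.toLin'_apply, Matrix.mulVec_diagonal]
      rfl
    rw [h1, h2]
  -- measure of the diagonal image of the `ℓ_p^m` unit ball
  have hAB : volume (L '' (eqp '' Bp))
      = ENNReal.ofReal (∏ j ∈ Finset.range m, σ j) * ballVolume p m := by
    rw [MeasureTheory.Measure.addHaar_image_linearMap]
    congr 1
    rw [hL, LinearMap.det_toLin', Matrix.det_diagonal,
      Fin.prod_univ_eq_prod_range (fun j => σ j) m,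
      abs_of_pos (Finset.prod_pos fun i _ => hσpos i)]
  calc ENNReal.ofReal (∏ j ∈ Finset.range m, σ j) * ballVolume p m
      = volume (L '' (eqp '' Bp)) := hAB.symm
    _ ≤ volume (⋃ i, eqq '' Metric.closedBall (π (y i)) ε) := measure_mono hsub
    _ ≤ ∑ i : Fin n, volume (eqq '' Metric.closedBall (π (y i)) ε) := measure_iUnion_fintype_le _ _
    _ = ∑ _i : Fin n, ENNReal.ofReal (ε ^ m) * ballVolume q m := by
        refine Finset.sum_congr rfl fun i _ => ?_
        exact vol_image_closedBall q m _ hε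
    _ = n * (ENNReal.ofReal (ε ^ m) * ballVolume q m) := by
        rw [Finset.sum_const, Finset.card_univ, Fintype.card_fin, nsmul_eq_mul]

/-- Elementary `ℝ≥0∞`/real computation extracting the entropy-number lower bound from the
volume comparison. -/
lemma final_real {Vp Vq : ℝ≥0∞} (hq0 : Vq ≠ 0) (hqt : Vq ≠ ∞) {P εv : ℝ} {n m : ℕ}
    (hn : 1 ≤ n) (hm : 0 < m) (hP : 0 < P) (hε : 0 < εv)
    (h : ENNReal.ofReal P * Vp ≤ (n : ℝ≥0∞) * (ENNReal.ofReal (εv ^ m) * Vq)) :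
    ((Vp / Vq).toReal * P / (n : ℝ)) ^ (1 / (m : ℝ)) ≤ εv := by
  have hm' : (0 : ℝ) < m := by exact_mod_cast hm
  have hn' : (0 : ℝ) < n := by exact_mod_cast hn
  have hb : 0 < Vq.toReal := ENNReal.toReal_pos hq0 hqt
  have hbase : (Vp / Vq).toReal * P / (n : ℝ) ≤ εv ^ m := by
    have hrhs : (n : ℝ≥0∞) * (ENNReal.ofReal (εv ^ m) * Vq) ≠ ∞ :=
      ENNReal.mul_ne_top (ENNReal.natCast_ne_top n)
        (ENNReal.mul_ne_top ENNReal.ofReal_ne_top hqt)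
    have h' := ENNReal.toReal_mono hrhs h
    rw [ENNReal.toReal_mul, ENNReal.toReal_mul, ENNReal.toReal_mul,
      ENNReal.toReal_ofReal hP.le, ENNReal.toReal_ofReal (by positivity),
      ENNReal.toReal_natCast] at h'
    rw [ENNReal.toReal_div]
    have heq : Vp.toReal / Vq.toReal * P / (n : ℝ) = (P * Vp.toReal) / (Vq.toReal * n) := by
      field_simp
    rw [heq, div_le_iff₀ (by positivity)]
    calc P * Vp.toReal ≤ n * (εv ^ m * Vq.toReal) := h'
      _ = εv ^ m * (Vq.toReal * n) := by ring
  have hnn : 0 ≤ (Vp / Vq).toReal * P / (n : ℝ) := by positivity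
  calc ((Vp / Vq).toReal * P / (n : ℝ)) ^ (1 / (m : ℝ))
      ≤ (εv ^ m) ^ (1 / (m : ℝ)) := Real.rpow_le_rpow hnn hbase (by positivity)
    _ = εv := by
        rw [← Real.rpow_natCast εv m, ← Real.rpow_mul hε.le, mul_one_div_cancel hm'.ne',
          Real.rpow_one]

/-- **Lemma 2.4 (lower bound).**
Let `1 ≤ p, q ≤ ∞` and let `σ` be a non-increasing sequence of positive reals tending to
zero (here `σ k` denotes the `(k+1)`-st term `σ_{k+1}` of the paper) such that the
diagonal operator `D_σ : ℓ_p → ℓ_q` is bounded.  Then for all `n ≥ 1`,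
`e_n(D_σ) ≥ sup_{k ≥ 1} ((λ^k(B_{ℓ_p^k}) / λ^k(B_{ℓ_q^k})) σ_1⋯σ_k / n)^{1/k}`
(stated in `ℝ≥0∞` via `ENNReal.ofReal`, which for these non-negative quantities is
equivalent to the real inequality). -/
theorem statement7 (p q : ℝ≥0∞) [Fact (1 ≤ p)] [Fact (1 ≤ q)]
    (σ : ℕ → ℝ) (hσpos : ∀ k, 0 < σ k) (hσanti : Antitone σ)
    (hσlim : Tendsto σ atTop (nhds 0))
    (D : lp (fun _ : ℕ => ℝ) p →L[ℝ] lp (fun _ : ℕ => ℝ) q)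
    (hD : ∀ (x : lp (fun _ : ℕ => ℝ) p) (k : ℕ), D x k = σ k * x k) :
    ∀ n : ℕ, 1 ≤ n →
      (⨆ k : ℕ, ENNReal.ofReal
          (((ballVolume p (k + 1) / ballVolume q (k + 1)).toReal *
              (∏ i ∈ Finset.range (k + 1), σ i) / n) ^ (1 / (k + 1 : ℝ)))) ≤
        ENNReal.ofReal (entropyNumber n (D '' Metric.closedBall 0 1)) := by
  intro n hn
  refine iSup_le fun k => ?_
  refine ENNReal.ofReal_le_ofReal ?_
  refine le_csInf ⟨‖D‖ + 1, by positivity, fun _ => 0, ?_⟩ ?_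
  · rintro - ⟨x, hx, rfl⟩
    refine Set.mem_iUnion.2 ⟨⟨0, hn⟩, ?_⟩
    rw [Metric.mem_closedBall, dist_zero_right]
    have h1 := D.le_opNorm x
    have h2 : ‖x‖ ≤ 1 := mem_closedBall_zero_iff.1 hx
    nlinarith [norm_nonneg (D x), D.opNorm_nonneg]
  · rintro ε ⟨hε, y, hcov⟩
    have hkey := key_vol p q σ hσpos D hD (m := k + 1) hε y hcov
    have hP : 0 < ∏ i ∈ Finset.range (k + 1), σ i :=
      Finset.prod_pos fun i _ => hσpos i
    have := final_real (ballVolume_pos q (k + 1)).ne' (ballVolume_ne_top q (k + 1))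
      hn k.succ_pos hP hε hkey
    convert this using 3 <;> push_cast <;> rfl
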